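/- (Projection onto moving nullspaces) Let K=J^k with J a compact interval, q: K × C → F continuous with each q(r,·) linear, and suppose there exist γ₁,…,γ_d ∈ C¹ with γ_m'(0)=0 such that for every r∈K the vectors q(r,γ₁),…,q(r,γ_d) form a basis of the (r-independent) range F_q. Then for every ε>0 there exists a continuous map χ: K → C¹ such that for every r∈K: q(r,χ(r))=0, (χ(r))'(0)=1, and the supremum norm |χ(r)|_C < ε. -/

import Mathlib

open Set Submodule in
lemma coeffs_exist {K : Type*} [TopologicalSpace K]
    {E : Type*} [NormedAddCommGroup E] [NormedSpace ℝ E]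
    {F : Type*} [NormedAddCommGroup F] [NormedSpace ℝ F] [FiniteDimensional ℝ F]
    (q : K → E →ₗ[ℝ] F) (hqc : Continuous fun p : K × E => q p.1 p.2)
    {d : ℕ} (γ : Fin d → E) (r₀ : K)
    (hli : ∀ r, LinearIndependent ℝ (fun m => q r (γ m)))
    (hspan : ∀ r, Submodule.span ℝ (Set.range fun m => q r (γ m))
      = Submodule.span ℝ (Set.range fun m => q r₀ (γ m)))
    (hmem : ∀ r φ, q r φ ∈ Submodule.span ℝ (Set.range fun m => q r₀ (γ m))) :
    ∃ c : K × E → Fin d → ℝ, Continuous c ∧ (∀ r, c (r, 0) = 0) ∧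
      ∀ p, q p.1 p.2 = ∑ m, c p m • q p.1 (γ m) := by
  classical
  let S : Submodule ℝ F := Submodule.span ℝ (Set.range fun m => q r₀ (γ m))
  let e : Module.Basis (Fin d) ℝ S := Module.Basis.span (hli r₀)
  let v : K → Fin d → S := fun r m => ⟨q r (γ m), hmem r (γ m)⟩
  let x : K × E → S := fun p => ⟨q p.1 p.2, hmem p.1 p.2⟩
  let A : K → Matrix (Fin d) (Fin d) ℝ := fun r => e.toMatrix (v r)
  have hAunit : ∀ r, IsUnit (A r).det := by
    intro r
    rw [show (A r).det = (e.toMatrix (v r)).det from rfl, ← e.det_apply, ← Module.Basis.is_basis_iff_det]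
    constructor
    · exact LinearIndependent.of_comp S.subtype (hli r)
    · apply Submodule.map_injective_of_injective S.injective_subtype
      rw [Submodule.map_span, Submodule.map_top, Submodule.range_subtype, ← Set.range_comp]
      exact hspan r
  let c : K × E → Fin d → ℝ := fun p => Matrix.mulVec ((A p.1)⁻¹) (fun j => e.repr (x p) j)
  refine ⟨c, ?_, ?_, ?_⟩
  · -- continuity
    have hxc : Continuous x := hqc.subtype_mk _
    have hwc : Continuous fun p => (fun j => e.repr (x p) j) := by
      apply continuous_pi
      intro j
      exact ((e.coord j).continuous_of_finiteDimensional).comp hxc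
    have hAc : Continuous A := by
      apply continuous_matrix
      intro i j
      have : Continuous fun r : K => (r, γ j) := continuous_id.prodMk continuous_const
      exact ((e.coord i).continuous_of_finiteDimensional).comp ((hqc.comp this).subtype_mk _)
    have hAinv : Continuous fun r => (A r)⁻¹ := by
      simp only [Matrix.inv_def, Ring.inverse_eq_inv]
      exact (hAc.matrix_det.inv₀ fun r => (hAunit r).ne_zero).smul hAc.matrix_adjugate
    apply continuous_pi
    intro m
    show Continuous fun p => ∑ j, (A p.1)⁻¹ m j * e.repr (x p) j
    apply continuous_finset_sum
    intro j _
    exact (((continuous_apply j).comp ((continuous_apply m).comp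
      (hAinv.comp continuous_fst)))).mul ((continuous_apply j).comp hwc)
  · -- zero
    intro r
    have hx0 : x (r, 0) = 0 := by
      ext
      simp [x]
    show Matrix.mulVec ((A r)⁻¹) (fun j => e.repr (x (r,0)) j) = 0
    have h2 : (fun j : Fin d => (e.repr (0 : S)) j) = 0 := by
      funext j; simp
    rw [hx0, h2, Matrix.mulVec_zero]
  · -- key identity
    intro p
    have hAAinv : (A p.1).mulVec (c p) = fun j => e.repr (x p) j := by
      show (A p.1).mulVec (Matrix.mulVec ((A p.1)⁻¹) (fun j => e.repr (x p) j)) = _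
      rw [Matrix.mulVec_mulVec, Matrix.mul_nonsing_inv _ (hAunit p.1), Matrix.one_mulVec]
    have hx : x p = ∑ m, c p m • v p.1 m := by
      apply e.repr.injective
      ext j
      have : e.repr (∑ m, c p m • v p.1 m) j = ∑ m, c p m * e.repr (v p.1 m) j := by
        rw [map_sum, Finsupp.finset_sum_apply]
        simp [Finsupp.smul_apply]
      rw [this]
      have : ∑ m, c p m * e.repr (v p.1 m) j = ((A p.1).mulVec (c p)) j := by
        simp [Matrix.mulVec, dotProduct, A, Module.Basis.toMatrix_apply, mul_comm]
      rw [this, hAAinv]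
    have := congrArg (Subtype.val) hx
    simpa using this

/-- Extension of a continuous map on `[-h,0]` to `ℝ` via the projection onto `[-h,0]`;
used to speak about differentiability of elements of `C([-h,0],ℝ)`. -/
noncomputable def extF (h : ℝ) (hh : -h ≤ (0:ℝ)) (φ : C(Set.Icc (-h) 0, ℝ)) : ℝ → ℝ :=
  fun s => φ (Set.projIcc (-h) 0 hh s)

/-- projection onto moving nullspaces: for `K = J^k` (`J = [a,b]`),
`q : K × C → F` continuous and linear in the second variable, with `γ₁,…,γ_d ∈ C¹`,
`γ_m'(0) = 0`, such that `q(r,γ₁),…,q(r,γ_d)` is a basis of the `r`-independent range for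
every `r`, and any `ε > 0`, there is a continuous map `χ : K → C¹` with `q(r,χ(r)) = 0`,
`(χ(r))'(0) = 1` and `|χ(r)|_C < ε` for all `r`.  (Continuity of `χ` into `C¹` is
expressed by continuity of `χ` and of the derivative map `Dχ` into `C`.) -/
theorem stmt8 (h : ℝ) (hh : 0 < h) (k : ℕ) (a b : ℝ) (hab : a ≤ b)
    {F : Type*} [NormedAddCommGroup F] [NormedSpace ℝ F] [FiniteDimensional ℝ F]
    (q : (Fin k → Set.Icc a b) → C(Set.Icc (-h) 0, ℝ) →ₗ[ℝ] F)
    (hqc : Continuous fun p : (Fin k → Set.Icc a b) × C(Set.Icc (-h) 0, ℝ) => q p.1 p.2)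
    (d : ℕ) (γ : Fin d → C(Set.Icc (-h) 0, ℝ))
    (hγsm : ∀ m, ContDiffOn ℝ 1 (extF h (by linarith) (γ m)) (Set.Icc (-h) 0))
    (hγ0 : ∀ m, derivWithin (extF h (by linarith) (γ m)) (Set.Icc (-h) 0) 0 = 0)
    (hrange : ∀ r r', LinearMap.range (q r) = LinearMap.range (q r'))
    (hbasis : ∀ r, LinearIndependent ℝ (fun m => q r (γ m)) ∧
      ∀ φ, q r φ ∈ Submodule.span ℝ (Set.range fun m => q r (γ m)))
    (ε : ℝ) (hε : 0 < ε) :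
    ∃ χ Dχ : (Fin k → Set.Icc a b) → C(Set.Icc (-h) 0, ℝ),
      Continuous χ ∧ Continuous Dχ ∧
      ∀ r, q r (χ r) = 0 ∧
        (∀ t : Set.Icc (-h) 0,
          HasDerivWithinAt (extF h (by linarith) (χ r)) (Dχ r t) (Set.Icc (-h) 0) (t : ℝ)) ∧
        Dχ r ⟨0, by constructor <;> linarith⟩ = 1 ∧
        ‖χ r‖ < ε := by
  classical
  have hneg : -h ≤ (0:ℝ) := by linarith
  have hneg' : -h < (0:ℝ) := by linarith
  have hγsm' : ∀ m, ContDiffOn ℝ 1 (extF h hneg (γ m)) (Set.Icc (-h) 0) := hγsm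
  have hγ0' : ∀ m, derivWithin (extF h hneg (γ m)) (Set.Icc (-h) 0) 0 = 0 := hγ0
  set r₀ : Fin k → Set.Icc a b := fun _ => ⟨a, Set.left_mem_Icc.2 hab⟩ with hr₀
  -- span facts
  have hrange_eq : ∀ r, LinearMap.range (q r)
      = Submodule.span ℝ (Set.range fun m => q r₀ (γ m)) := by
    intro r
    have h1 : LinearMap.range (q r₀) = Submodule.span ℝ (Set.range fun m => q r₀ (γ m)) := by
      apply le_antisymm
      · rintro x ⟨φ, rfl⟩; exact (hbasis r₀).2 φ
      · rw [Submodule.span_le]; rintro x ⟨m, rfl⟩; exact ⟨γ m, rfl⟩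
    rw [hrange r r₀, h1]
  have hmem : ∀ r φ, q r φ ∈ Submodule.span ℝ (Set.range fun m => q r₀ (γ m)) :=
    fun r φ => hrange_eq r ▸ LinearMap.mem_range_self _ φ
  have hspan : ∀ r, Submodule.span ℝ (Set.range fun m => q r (γ m))
      = Submodule.span ℝ (Set.range fun m => q r₀ (γ m)) := by
    intro r
    apply le_antisymm
    · rw [Submodule.span_le]; rintro x ⟨m, rfl⟩; exact hmem r (γ m)
    · rw [← hrange_eq r]
      rintro x ⟨φ, rfl⟩
      exact (hbasis r).2 φ
  obtain ⟨c, hc_cont, hc0, hc_eq⟩ :=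
    coeffs_exist q hqc γ r₀ (fun r => (hbasis r).1) hspan hmem
  -- the projection map
  set Φ : (Fin k → Set.Icc a b) × C(Set.Icc (-h) 0, ℝ) → C(Set.Icc (-h) 0, ℝ) :=
    fun p => p.2 - ∑ m, c p m • γ m with hΦdef
  have hΦc : Continuous Φ := by
    apply Continuous.sub continuous_snd
    apply continuous_finset_sum
    intro m _
    exact (((continuous_apply m).comp hc_cont)).smul continuous_const
  have hΦ0 : ∀ r, Φ (r, 0) = 0 := by
    intro r
    simp [Φ, hc0 r]
  have hqΦ : ∀ p, q p.1 (Φ p) = 0 := by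
    intro p
    simp only [Φ, map_sub, map_sum, map_smul]
    rw [← hc_eq p, sub_self]
  -- tube lemma : uniform smallness
  obtain ⟨δ, hδpos, hδball⟩ :
      ∃ δ > 0, ∀ r ψ, ‖ψ‖ < δ → ‖Φ (r, ψ)‖ < ε := by
    have hopen : IsOpen {p : (Fin k → Set.Icc a b) × C(Set.Icc (-h) 0, ℝ) | ‖Φ p‖ < ε} :=
      isOpen_lt hΦc.norm continuous_const
    have hsub : (Set.univ : Set (Fin k → Set.Icc a b)) ×ˢ ({0} : Set C(Set.Icc (-h) 0, ℝ))
        ⊆ {p | ‖Φ p‖ < ε} := by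
      rintro ⟨r, ψ⟩ ⟨-, hψ⟩
      rcases hψ with rfl
      simp [hΦ0 r, hε]
    obtain ⟨u, v, hu, hv, huu, hvv, huv⟩ :=
      generalized_tube_lemma isCompact_univ isCompact_singleton hopen hsub
    obtain ⟨δ, hδ, hball⟩ := Metric.isOpen_iff.1 hv 0 (hvv rfl)
    refine ⟨δ, hδ, fun r ψ hψ => ?_⟩
    have : (r, ψ) ∈ u ×ˢ v := ⟨huu (Set.mem_univ r), hball (by simpa [dist_eq_norm] using hψ)⟩
    exact huv this
  -- the small C¹ function
  set s : ℝ := δ / 2 with hsdef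
  have hs : 0 < s := by positivity
  set φs : C(Set.Icc (-h) 0, ℝ) :=
    ⟨fun t => s * Real.sin ((t : ℝ) / s),
      continuous_const.mul (Real.continuous_sin.comp (continuous_subtype_val.div_const s))⟩
    with hφsdef
  have hφsnorm : ‖φs‖ ≤ s := by
    apply (ContinuousMap.norm_le _ hs.le).2
    intro t
    rw [Real.norm_eq_abs]
    show |s * Real.sin ((t : ℝ) / s)| ≤ s
    rw [abs_mul, abs_of_pos hs]
    nlinarith [abs_le.2 ⟨Real.neg_one_le_sin ((t:ℝ)/s), Real.sin_le_one ((t:ℝ)/s)⟩,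
      abs_nonneg (Real.sin ((t:ℝ)/s))]
  -- derivative data for the γ's
  have hDγc : ∀ m, Continuous fun t : Set.Icc (-h) 0 =>
      derivWithin (extF h hneg (γ m)) (Set.Icc (-h) 0) (t : ℝ) := by
    intro m
    exact ((hγsm' m).continuousOn_derivWithin (uniqueDiffOn_Icc hneg') le_rfl).restrict
  set Dγ : Fin d → C(Set.Icc (-h) 0, ℝ) := fun m =>
    ⟨fun t => derivWithin (extF h hneg (γ m)) (Set.Icc (-h) 0) (t : ℝ), hDγc m⟩ with hDγdef
  have hγder : ∀ m, ∀ t : Set.Icc (-h) 0,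
      HasDerivWithinAt (extF h hneg (γ m)) (Dγ m t) (Set.Icc (-h) 0) (t : ℝ) := by
    intro m t
    exact ((hγsm' m).differentiableOn one_ne_zero (t : ℝ) t.2).hasDerivWithinAt
  -- derivative of φs
  set Dφs : C(Set.Icc (-h) 0, ℝ) :=
    ⟨fun t => Real.cos ((t : ℝ) / s),
      Real.continuous_cos.comp (continuous_subtype_val.div_const s)⟩ with hDφsdef
  have hφsder : ∀ t : Set.Icc (-h) 0,
      HasDerivWithinAt (extF h hneg φs) (Dφs t) (Set.Icc (-h) 0) (t : ℝ) := by
    intro t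
    have h1 : HasDerivAt (fun x : ℝ => x / s) (1 / s) (t : ℝ) := (hasDerivAt_id _).div_const s
    have h2 := (Real.hasDerivAt_sin ((t : ℝ) / s)).comp (t : ℝ) h1
    have h3 := h2.const_mul s
    have h4 : HasDerivAt (fun x : ℝ => s * Real.sin (x / s)) (Real.cos ((t : ℝ) / s)) (t : ℝ) := by
      convert h3 using 1
      · rfl
      · rfl
      · rfl
      field_simp
    refine (h4.hasDerivWithinAt).congr ?_ ?_
    · intro y hy
      simp [extF, Set.projIcc_of_mem hneg hy, φs]
    · simp [extF, Set.projIcc_of_mem hneg t.2, φs]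
  -- definitions of χ and Dχ
  set χ : (Fin k → Set.Icc a b) → C(Set.Icc (-h) 0, ℝ) := fun r => Φ (r, φs) with hχdef
  set Dχ : (Fin k → Set.Icc a b) → C(Set.Icc (-h) 0, ℝ) :=
    fun r => Dφs - ∑ m, c (r, φs) m • Dγ m with hDχdef
  have hcr : Continuous fun r : Fin k → Set.Icc a b => c (r, φs) :=
    hc_cont.comp (continuous_id.prodMk continuous_const)
  refine ⟨χ, Dχ, ?_, ?_, ?_⟩
  · exact hΦc.comp (continuous_id.prodMk continuous_const)
  · apply Continuous.sub continuous_const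
    apply continuous_finset_sum
    intro m _
    exact ((continuous_apply m).comp hcr).smul continuous_const
  intro r
  have hext : extF h hneg (χ r) = fun x : ℝ =>
      extF h hneg φs x - ∑ m, c (r, φs) m * extF h hneg (γ m) x := by
    funext x
    simp [extF, χ, Φ, ContinuousMap.sum_apply]
  refine ⟨hqΦ (r, φs), ?_, ?_, ?_⟩
  · intro t
    have hDval : Dχ r t = Dφs t - ∑ m, c (r, φs) m * Dγ m t := by
      simp [Dχ, ContinuousMap.sum_apply]
    rw [hDval]
    show HasDerivWithinAt (extF h hneg (χ r)) _ (Set.Icc (-h) 0) (t : ℝ)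
    rw [hext]
    exact (hφsder t).sub (HasDerivWithinAt.fun_sum fun m _ => (hγder m t).const_mul _)
  · have : Dχ r ⟨0, by constructor <;> linarith⟩
        = Dφs ⟨0, by constructor <;> linarith⟩
          - ∑ m, c (r, φs) m * Dγ m ⟨0, by constructor <;> linarith⟩ := by
      simp [Dχ, ContinuousMap.sum_apply]
    rw [this]
    have h0 : ∀ m, Dγ m ⟨0, by constructor <;> linarith⟩ = 0 := by
      intro m
      show derivWithin (extF h hneg (γ m)) (Set.Icc (-h) 0) ((0:ℝ)) = 0
      exact hγ0' m
    simp only [h0, mul_zero, Finset.sum_const_zero, sub_zero]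
    show Real.cos ((0:ℝ) / s) = 1
    rw [zero_div, Real.cos_zero]
  · exact hδball r φs (lt_of_le_of_lt hφsnorm (by rw [hsdef]; linarith))
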